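/- arXiv:2011.14262 — 6 statements merged into one kernel-verified Lean document; each statement's English description precedes it below -/
import Mathlib

section
/- Let ψ₁ ≠ ψ₂ be positive reals, K a finite index set, P : K → [0,1] a probability distribution, and ⟨k⟩ = Σ_k k·P(k) > 0. Then there exist no Θ₁ > 0 and Θ₂ > 0 satisfying simultaneously Θ₁ = (ψ₁/⟨k⟩)·Σ_{k'} k'²P(k')Θ₁/(1+ψ₁k'Θ₁+ψ₂k'Θ₂) and Θ₂ = (ψ₂/⟨k⟩)·Σ_{k'} k'²P(k')Θ₂/(1+ψ₁k'Θ₁+ψ₂k'Θ₂). -/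
open Finset

/-- Non-coexistence of two competing epidemics: there are no
positive solutions (Θ₁, Θ₂) to the pair of steady-state self-consistency
equations when ψ₁ ≠ ψ₂. -/
theorem no_positive_coexistence
    (K : ℕ) (P : ℕ → ℝ)
    (hP0 : ∀ k, 0 ≤ P k) (hP1 : ∀ k, P k ≤ 1)
    (hPsum : ∑ k ∈ Finset.range (K + 1), P k = 1)
    (avgk : ℝ)
    (havgk : avgk = ∑ k ∈ Finset.range (K + 1), (k : ℝ) * P k)
    (havgk_pos : 0 < avgk)
    (ψ₁ ψ₂ : ℝ) (hψ₁ : 0 < ψ₁) (hψ₂ : 0 < ψ₂) (hψne : ψ₁ ≠ ψ₂) :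
    ¬ ∃ Θ₁ Θ₂ : ℝ, 0 < Θ₁ ∧ 0 < Θ₂ ∧
      Θ₁ = (ψ₁ / avgk) * ∑ k ∈ Finset.range (K + 1),
        (k : ℝ) ^ 2 * P k * Θ₁ / (1 + ψ₁ * k * Θ₁ + ψ₂ * k * Θ₂) ∧
      Θ₂ = (ψ₂ / avgk) * ∑ k ∈ Finset.range (K + 1),
        (k : ℝ) ^ 2 * P k * Θ₂ / (1 + ψ₁ * k * Θ₁ + ψ₂ * k * Θ₂) := by
  rintro ⟨Θ₁, Θ₂, h1, h2, e1, e2⟩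
  set S : ℝ := ∑ k ∈ Finset.range (K + 1),
      (k : ℝ) ^ 2 * P k / (1 + ψ₁ * k * Θ₁ + ψ₂ * k * Θ₂) with hS
  have f1 : ∑ k ∈ Finset.range (K + 1),
      (k : ℝ) ^ 2 * P k * Θ₁ / (1 + ψ₁ * k * Θ₁ + ψ₂ * k * Θ₂) = Θ₁ * S := by
    rw [hS, Finset.mul_sum]
    exact Finset.sum_congr rfl fun k _ => by ring
  have f2 : ∑ k ∈ Finset.range (K + 1),
      (k : ℝ) ^ 2 * P k * Θ₂ / (1 + ψ₁ * k * Θ₁ + ψ₂ * k * Θ₂) = Θ₂ * S := by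
    rw [hS, Finset.mul_sum]
    exact Finset.sum_congr rfl fun k _ => by ring
  rw [f1] at e1
  rw [f2] at e2
  have ha' := havgk_pos.ne'
  have g1 : ψ₁ * S = avgk := by
    field_simp at e1
    have := mul_left_cancel₀ h1.ne' (by rw [e1] : Θ₁ * avgk = Θ₁ * (ψ₁ * S))
    linarith
  have g2 : ψ₂ * S = avgk := by
    field_simp at e2
    have := mul_left_cancel₀ h2.ne' (by rw [e2] : Θ₂ * avgk = Θ₂ * (ψ₂ * S))
    linarith
  have hSne : S ≠ 0 := by
    intro h
    rw [h, mul_zero] at g1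
    exact ha' g1.symm
  exact hψne (mul_right_cancel₀ hSne (g1.trans g2.symm))
end

section
/- Let ψ > 0, P : {0,...,K} → [0,1] a probability distribution with ⟨k⟩ = Σ_k kP(k) > 0, ⟨k²⟩ = Σ_k k²P(k), and P(k) > 0 for some k ≥ 1. The equation Θ = (ψ/⟨k⟩)·Σ_{k'} k'²P(k')Θ/(1+ψk'Θ) has a solution Θ ∈ (0,1) if and only if ψ·⟨k²⟩/⟨k⟩ > 1. -/
open Finset

/-- The self-consistency equation has a nontrivial solution
Θ ∈ (0,1) if and only if ψ⟨k²⟩/⟨k⟩ > 1. -/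
theorem nontrivial_solution_iff_threshold
    (K : ℕ) (P : ℕ → ℝ)
    (hP0 : ∀ k, 0 ≤ P k) (hP1 : ∀ k, P k ≤ 1)
    (hPsum : ∑ k ∈ Finset.range (K + 1), P k = 1)
    (avgk m2 : ℝ)
    (havgk : avgk = ∑ k ∈ Finset.range (K + 1), (k : ℝ) * P k)
    (hm2 : m2 = ∑ k ∈ Finset.range (K + 1), (k : ℝ) ^ 2 * P k)
    (havgk_pos : 0 < avgk)
    (ψ : ℝ) (hψ : 0 < ψ)
    (hnontriv : ∃ k ∈ Finset.range (K + 1), 1 ≤ k ∧ 0 < P k) :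
    (∃ Θ ∈ Set.Ioo (0 : ℝ) 1,
      Θ = (ψ / avgk) * ∑ k' ∈ Finset.range (K + 1),
        (k' : ℝ) ^ 2 * P k' * Θ / (1 + ψ * k' * Θ)) ↔ 1 < ψ * m2 / avgk := by
  obtain ⟨k₀, hk₀mem, hk₀1, hk₀P⟩ := hnontriv
  set S : ℝ → ℝ := fun θ => ∑ k ∈ Finset.range (K+1), (k:ℝ)^2 * P k / (1 + ψ * k * θ)
    with hSdef
  have hden : ∀ (k : ℕ) (θ : ℝ), 0 ≤ θ → 0 < 1 + ψ * k * θ := by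
    intro k θ hθ
    have : 0 ≤ ψ * k * θ := by positivity
    linarith
  have hScont : ContinuousOn S (Set.Icc 0 1) := by
    apply continuousOn_finset_sum
    intro k hk
    apply ContinuousOn.div continuousOn_const
    · fun_prop
    · intro θ hθ; exact ne_of_gt (hden k θ hθ.1)
  have hS0 : S 0 = m2 := by
    rw [hm2, hSdef]; apply Finset.sum_congr rfl; intro k _; simp
  have hS1 : S 1 < avgk / ψ := by
    rw [havgk, Finset.sum_div, hSdef]
    apply Finset.sum_lt_sum
    · intro k _
      rw [div_le_div_iff₀ (hden k 1 zero_le_one) hψ]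
      have hk0 : (0:ℝ) ≤ (k:ℝ) := Nat.cast_nonneg k
      have := hP0 k
      nlinarith
    · refine ⟨k₀, hk₀mem, ?_⟩
      rw [div_lt_div_iff₀ (hden k₀ 1 zero_le_one) hψ]
      have hk0 : (1:ℝ) ≤ (k₀:ℝ) := by exact_mod_cast hk₀1
      nlinarith
  have hsum : ∀ θ : ℝ, ∑ k' ∈ Finset.range (K + 1),
      (k' : ℝ) ^ 2 * P k' * θ / (1 + ψ * k' * θ) = θ * S θ := by
    intro θ
    rw [hSdef, Finset.mul_sum]
    apply Finset.sum_congr rfl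
    intro k _
    ring
  constructor
  · rintro ⟨Θ, ⟨hΘ0, hΘ1⟩, heq⟩
    rw [hsum] at heq
    have hg : Θ * ((ψ/avgk) * S Θ) = Θ * 1 := by
      rw [mul_one, show Θ * ((ψ/avgk) * S Θ) = ψ/avgk * (Θ * S Θ) from by ring, ← heq]
    have hg1 : (ψ/avgk) * S Θ = 1 := mul_left_cancel₀ (ne_of_gt hΘ0) hg
    have hSlt : S Θ < S 0 := by
      rw [hS0, hm2, hSdef]
      apply Finset.sum_lt_sum
      · intro k _
        rw [div_le_iff₀ (hden k Θ hΘ0.le)]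
        have hk0 : (0:ℝ) ≤ (k:ℝ) := Nat.cast_nonneg k
        have hP := hP0 k
        have hpos : 0 ≤ (k:ℝ)^2 * P k * (ψ * k * Θ) := by positivity
        nlinarith [hpos]
      · refine ⟨k₀, hk₀mem, ?_⟩
        rw [div_lt_iff₀ (hden k₀ Θ hΘ0.le)]
        have hk0 : (0:ℝ) < (k₀:ℝ) := by exact_mod_cast Nat.lt_of_lt_of_le Nat.zero_lt_one hk₀1
        have hpos : 0 < (k₀:ℝ)^2 * P k₀ * (ψ * k₀ * Θ) := by positivity
        nlinarith [hpos]
    have hpos : 0 < ψ / avgk := by positivity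
    have : (ψ/avgk) * S Θ < (ψ/avgk) * S 0 := by
      exact mul_lt_mul_of_pos_left hSlt hpos
    rw [hS0, hg1] at this
    calc (1:ℝ) < ψ/avgk * m2 := this
      _ = ψ * m2 / avgk := by ring
  · intro hT
    have h0 : 1 < (ψ/avgk) * S 0 := by
      rw [hS0]
      calc (1:ℝ) < ψ * m2 / avgk := hT
        _ = ψ/avgk * m2 := by ring
    have h1 : (ψ/avgk) * S 1 < 1 := by
      have hpos : 0 < ψ / avgk := by positivity
      have h := mul_lt_mul_of_pos_left hS1 hpos
      have heq : ψ/avgk * (avgk/ψ) = 1 := by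
        field_simp
      linarith
    have hcont : ContinuousOn (fun θ => (ψ/avgk) * S θ) (Set.Icc 0 1) :=
      continuousOn_const.mul hScont
    have hsub := intermediate_value_Icc' (zero_le_one) hcont
    have h1mem : (1:ℝ) ∈ Set.Icc ((fun θ => (ψ/avgk) * S θ) 1)
        ((fun θ => (ψ/avgk) * S θ) 0) := ⟨le_of_lt h1, le_of_lt h0⟩
    obtain ⟨Θ, hΘmem, hΘeq⟩ := hsub h1mem
    simp only at hΘeq
    have hΘ0 : Θ ≠ 0 := by
      intro h; rw [h] at hΘeq; rw [hΘeq] at h0; exact lt_irrefl 1 h0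
    have hΘ1 : Θ ≠ 1 := by
      intro h; rw [h] at hΘeq; rw [hΘeq] at h1; exact lt_irrefl 1 h1
    refine ⟨Θ, ⟨lt_of_le_of_ne hΘmem.1 (Ne.symm hΘ0), lt_of_le_of_ne hΘmem.2 hΘ1⟩, ?_⟩
    rw [hsum]
    calc Θ = Θ * ((ψ/avgk) * S Θ) := by rw [hΘeq, mul_one]
      _ = ψ/avgk * (Θ * S Θ) := by ring
end

section
/- Let ψ > ⟨k⟩/⟨k²⟩ where ⟨k⟩ = Σ_k kP(k) > 0 and ⟨k²⟩ = Σ_k k²P(k) for a probability distribution P on {0,...,K} with P(k) > 0 for some k ≥ 1. Then the fixed-point equation Θ = (ψ/⟨k⟩)·Σ_{k'} k'²P(k')Θ/(1+ψk'Θ) has a unique solution Θ* in (0,1). -/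
open Finset

/-- If ψ > ⟨k⟩/⟨k²⟩ then the fixed-point equation
Θ = (ψ/⟨k⟩)·Σ_{k'} k'²P(k')Θ/(1+ψk'Θ) has a unique solution in (0,1). -/
theorem unique_nontrivial_fixed_point
    (K : ℕ) (P : ℕ → ℝ)
    (hP0 : ∀ k, 0 ≤ P k) (hP1 : ∀ k, P k ≤ 1)
    (hPsum : ∑ k ∈ Finset.range (K + 1), P k = 1)
    (avgk m2 : ℝ)
    (havgk : avgk = ∑ k ∈ Finset.range (K + 1), (k : ℝ) * P k)
    (hm2 : m2 = ∑ k ∈ Finset.range (K + 1), (k : ℝ) ^ 2 * P k)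
    (havgk_pos : 0 < avgk)
    (hnontriv : ∃ k ∈ Finset.range (K + 1), 1 ≤ k ∧ 0 < P k)
    (ψ : ℝ) (hψ : avgk / m2 < ψ) :
    ∃! Θ : ℝ, Θ ∈ Set.Ioo (0 : ℝ) 1 ∧
      Θ = (ψ / avgk) * ∑ k' ∈ Finset.range (K + 1),
        (k' : ℝ) ^ 2 * P k' * Θ / (1 + ψ * k' * Θ) := by
  obtain ⟨k0, hk0mem, hk0ge, hk0P⟩ := hnontriv
  have hk0pos : (0 : ℝ) < (k0 : ℝ) := by exact_mod_cast hk0ge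
  have hm2pos : 0 < m2 := by
    rw [hm2]
    apply Finset.sum_pos'
    · intro i _; exact mul_nonneg (by positivity) (hP0 i)
    · exact ⟨k0, hk0mem, mul_pos (pow_pos hk0pos 2) hk0P⟩
  have hψpos : 0 < ψ := lt_trans (div_pos havgk_pos hm2pos) hψ
  set g : ℝ → ℝ := fun Θ =>
    (ψ / avgk) * ∑ k' ∈ Finset.range (K + 1), (k' : ℝ) ^ 2 * P k' / (1 + ψ * k' * Θ)
    with hgdef
  have hden : ∀ Θ : ℝ, 0 ≤ Θ → ∀ k : ℕ, 0 < 1 + ψ * k * Θ := by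
    intro Θ hΘ k; positivity
  -- strict antitonicity on [0,1]
  have hanti : StrictAntiOn g (Set.Icc 0 1) := by
    intro x hx y hy hxy
    apply mul_lt_mul_of_pos_left _ (by positivity)
    apply Finset.sum_lt_sum
    · intro i _
      apply div_le_div_of_nonneg_left (mul_nonneg (by positivity) (hP0 i)) (hden x hx.1 i)
      have h := mul_le_mul_of_nonneg_left hxy.le (by positivity : (0:ℝ) ≤ ψ * i)
      linarith
    · refine ⟨k0, hk0mem, ?_⟩
      apply div_lt_div_of_pos_left (mul_pos (pow_pos hk0pos 2) hk0P) (hden x hx.1 k0)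
      have h := mul_lt_mul_of_pos_left hxy (mul_pos hψpos hk0pos)
      linarith
  -- continuity
  have hcont : ContinuousOn g (Set.Icc 0 1) := by
    apply ContinuousOn.mul continuousOn_const
    apply continuousOn_finset_sum
    intro i _
    apply ContinuousOn.div continuousOn_const (by fun_prop)
    intro x hx
    exact (hden x hx.1 i).ne'
  -- g 0 > 1
  have hg0 : 1 < g 0 := by
    have hval : g 0 = ψ * m2 / avgk := by
      simp only [hgdef, mul_zero, add_zero, div_one, hm2]
      ring
    rw [hval, lt_div_iff₀ havgk_pos, one_mul]
    exact (div_lt_iff₀ hm2pos).mp hψ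
  -- g 1 < 1
  have hg1 : g 1 < 1 := by
    have hsum : (∑ k' ∈ Finset.range (K + 1), (k' : ℝ) ^ 2 * P k' / (1 + ψ * k' * 1))
        < avgk / ψ := by
      have havg : avgk / ψ = ∑ k' ∈ Finset.range (K + 1), (k' : ℝ) * P k' / ψ := by
        rw [havgk, Finset.sum_div]
      rw [havg]
      apply Finset.sum_lt_sum
      · intro i _
        rw [mul_one, div_le_div_iff₀ (hden 1 one_pos.le i |>.trans_eq (by ring)) hψpos]
        have h1 : (0:ℝ) ≤ (i : ℝ) * P i := mul_nonneg (Nat.cast_nonneg i) (hP0 i)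
        nlinarith
      · refine ⟨k0, hk0mem, ?_⟩
        rw [mul_one, div_lt_div_iff₀ (hden 1 one_pos.le k0 |>.trans_eq (by ring)) hψpos]
        nlinarith [mul_pos hk0pos hk0P]
    have : g 1 < (ψ / avgk) * (avgk / ψ) :=
      mul_lt_mul_of_pos_left hsum (by positivity)
    calc g 1 < (ψ / avgk) * (avgk / ψ) := this
      _ = 1 := by field_simp
  -- existence via IVT
  have h1mem : (1 : ℝ) ∈ Set.Ioo (g 1) (g 0) := ⟨hg1, hg0⟩
  obtain ⟨Θs, hΘsmem, hΘsval⟩ := intermediate_value_Ioo' zero_le_one hcont h1mem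
  -- fixed point equation ↔ g = 1
  have hsplit : ∀ Θ : ℝ,
      (ψ / avgk) * ∑ k' ∈ Finset.range (K + 1),
        (k' : ℝ) ^ 2 * P k' * Θ / (1 + ψ * k' * Θ) = Θ * g Θ := by
    intro Θ
    have : (∑ k' ∈ Finset.range (K + 1), (k' : ℝ) ^ 2 * P k' * Θ / (1 + ψ * k' * Θ))
        = Θ * ∑ k' ∈ Finset.range (K + 1), (k' : ℝ) ^ 2 * P k' / (1 + ψ * k' * Θ) := by
      rw [Finset.mul_sum]
      exact Finset.sum_congr rfl fun i _ => by ring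
    rw [this, hgdef]; ring
  have hiff : ∀ Θ ∈ Set.Ioo (0:ℝ) 1,
      (Θ = (ψ / avgk) * ∑ k' ∈ Finset.range (K + 1),
        (k' : ℝ) ^ 2 * P k' * Θ / (1 + ψ * k' * Θ)) ↔ g Θ = 1 := by
    intro Θ hΘ
    rw [hsplit Θ]
    constructor
    · intro h
      have h2 : Θ * g Θ = Θ * 1 := by rw [mul_one]; exact h.symm
      exact mul_left_cancel₀ (ne_of_gt hΘ.1) h2
    · intro h; rw [h, mul_one]
  refine ⟨Θs, ⟨hΘsmem, (hiff Θs hΘsmem).mpr hΘsval⟩, ?_⟩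
  intro y ⟨hymem, hyeq⟩
  have hy1 : g y = 1 := (hiff y hymem).mp hyeq
  have : g y = g Θs := by rw [hy1, hΘsval]
  exact hanti.injOn (Set.mem_Icc_of_Ioo hymem) (Set.mem_Icc_of_Ioo hΘsmem) this
end

section
/- Fix x > ⟨k⟩/⟨k²⟩ and a probability distribution P on {0,...,K} with ⟨k⟩ > 0 and P(k) > 0 for some k ≥ 1. Let H(x,y) = (1/⟨k⟩)·Σ_{k'} k'²P(k')xy/(1+k'xy), and define the sequence y₀ ∈ (0,1), yₙ₊₁ = H(x,yₙ). Then the sequence (yₙ) is monotone (increasing if y₁ > y₀, decreasing if y₁ < y₀), bounded in (0,1), and converges to the unique fixed point y_x ∈ (0,1) of y = H(x,y). -/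
open Finset Filter

/-- The fixed-point iteration yₙ₊₁ = H(x,yₙ) stays in (0,1),
is monotone (increasing if y₁ > y₀, decreasing if y₁ < y₀), and converges to
the unique fixed point y_x ∈ (0,1) of y = H(x,y), when x⟨k²⟩/⟨k⟩ > 1. -/
theorem fixed_point_iteration_converges
    (K : ℕ) (P : ℕ → ℝ)
    (hP0 : ∀ k, 0 ≤ P k) (hP1 : ∀ k, P k ≤ 1)
    (hPsum : ∑ k ∈ Finset.range (K + 1), P k = 1)
    (avgk m2 : ℝ)
    (havgk : avgk = ∑ k ∈ Finset.range (K + 1), (k : ℝ) * P k)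
    (hm2 : m2 = ∑ k ∈ Finset.range (K + 1), (k : ℝ) ^ 2 * P k)
    (havgk_pos : 0 < avgk)
    (hnontriv : ∃ k ∈ Finset.range (K + 1), 1 ≤ k ∧ 0 < P k)
    (x : ℝ) (hx : avgk / m2 < x)
    (H : ℝ → ℝ)
    (hH : ∀ y : ℝ, H y = (1 / avgk) * ∑ k' ∈ Finset.range (K + 1),
      (k' : ℝ) ^ 2 * P k' * x * y / (1 + k' * x * y))
    (yx : ℝ) (hyx_mem : yx ∈ Set.Ioo (0 : ℝ) 1) (hyx_fix : yx = H yx)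
    (hyx_uniq : ∀ z ∈ Set.Ioo (0 : ℝ) 1, z = H z → z = yx)
    (y : ℕ → ℝ) (hy0 : y 0 ∈ Set.Ioo (0 : ℝ) 1)
    (hiter : ∀ n : ℕ, y (n + 1) = H (y n)) :
    (∀ n : ℕ, y n ∈ Set.Ioo (0 : ℝ) 1) ∧
    (y 0 < y 1 → Monotone y) ∧
    (y 1 < y 0 → Antitone y) ∧
    Tendsto y atTop (nhds yx) := by
  obtain ⟨yx_pos, yx_lt1⟩ := hyx_mem
  obtain ⟨y0_pos, y0_lt1⟩ := hy0
  -- x is positive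
  have hm2pos : 0 < m2 := by
    obtain ⟨k, hkmem, hk1, hPk⟩ := hnontriv
    rw [hm2]
    have hk1' : (1:ℝ) ≤ (k:ℝ) := by exact_mod_cast hk1
    have hterm : (0:ℝ) < (k:ℝ)^2 * P k :=
      mul_pos (by nlinarith) hPk
    refine lt_of_lt_of_le hterm ?_
    exact Finset.single_le_sum (f := fun (i : ℕ) => (i:ℝ)^2 * P i)
      (fun i _ => mul_nonneg (sq_nonneg _) (hP0 i)) hkmem
  have hxpos : 0 < x := lt_trans (div_pos havgk_pos hm2pos) hx
  -- denominators are positive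
  have hden : ∀ (k : ℕ) (z : ℝ), 0 ≤ z → 0 < 1 + (k:ℝ) * x * z := by
    intro k z hz
    have : 0 ≤ (k:ℝ) * x * z :=
      mul_nonneg (mul_nonneg (Nat.cast_nonneg k) hxpos.le) hz
    linarith
  -- H is monotone on nonneg reals
  have hmonoH : ∀ a b : ℝ, 0 ≤ a → a ≤ b → H a ≤ H b := by
    intro a b ha hab
    rw [hH, hH]
    have hb : 0 ≤ b := le_trans ha hab
    apply mul_le_mul_of_nonneg_left _ (one_div_nonneg.mpr havgk_pos.le)
    apply Finset.sum_le_sum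
    intro k _
    rw [div_le_div_iff₀ (hden k a ha) (hden k b hb)]
    have hN : 0 ≤ (k:ℝ)^2 * P k * x :=
      mul_nonneg (mul_nonneg (sq_nonneg _) (hP0 k)) hxpos.le
    have h1 : (k:ℝ)^2 * P k * x * a ≤ (k:ℝ)^2 * P k * x * b :=
      mul_le_mul_of_nonneg_left hab hN
    nlinarith [mul_nonneg (mul_nonneg hN (Nat.cast_nonneg k)) (mul_nonneg hxpos.le (mul_nonneg ha hb))]
  -- scaling inequality : for 0 < a ≤ yx, a ≤ H a
  have hA : ∀ a : ℝ, 0 < a → a ≤ yx → a ≤ H a := by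
    intro a ha hayx
    have hsum : (a / yx) * (∑ k ∈ Finset.range (K+1), (k:ℝ)^2 * P k * x * yx / (1 + k * x * yx))
        ≤ ∑ k ∈ Finset.range (K+1), (k:ℝ)^2 * P k * x * a / (1 + k * x * a) := by
      rw [Finset.mul_sum]
      apply Finset.sum_le_sum
      intro k _
      have hd1 := hden k yx yx_pos.le
      have hd2 := hden k a ha.le
      have heq : (a / yx) * ((k:ℝ)^2 * P k * x * yx / (1 + k * x * yx))
          = (k:ℝ)^2 * P k * x * a / (1 + k * x * yx) := by
        field_simp
      rw [heq]
      have hNa : 0 ≤ (k:ℝ)^2 * P k * x * a :=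
        mul_nonneg (mul_nonneg (mul_nonneg (sq_nonneg _) (hP0 k)) hxpos.le) ha.le
      apply div_le_div_of_nonneg_left hNa hd2
      have : (k:ℝ) * x * a ≤ (k:ℝ) * x * yx :=
        mul_le_mul_of_nonneg_left hayx (mul_nonneg (Nat.cast_nonneg k) hxpos.le)
      linarith
    calc a = (a / yx) * H yx := by rw [← hyx_fix]; field_simp
      _ = (1 / avgk) * ((a / yx) * ∑ k ∈ Finset.range (K+1),
            (k:ℝ)^2 * P k * x * yx / (1 + k * x * yx)) := by rw [hH yx]; ring
      _ ≤ (1 / avgk) * ∑ k ∈ Finset.range (K+1),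
            (k:ℝ)^2 * P k * x * a / (1 + k * x * a) :=
          mul_le_mul_of_nonneg_left hsum (one_div_nonneg.mpr havgk_pos.le)
      _ = H a := (hH a).symm
  -- scaling inequality : for yx ≤ a, H a ≤ a
  have hB : ∀ a : ℝ, yx ≤ a → H a ≤ a := by
    intro a hayx
    have ha : 0 < a := lt_of_lt_of_le yx_pos hayx
    have hsum : (∑ k ∈ Finset.range (K+1), (k:ℝ)^2 * P k * x * a / (1 + k * x * a))
        ≤ (a / yx) * ∑ k ∈ Finset.range (K+1), (k:ℝ)^2 * P k * x * yx / (1 + k * x * yx) := by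
      rw [Finset.mul_sum]
      apply Finset.sum_le_sum
      intro k _
      have hd1 := hden k yx yx_pos.le
      have hd2 := hden k a ha.le
      have heq : (a / yx) * ((k:ℝ)^2 * P k * x * yx / (1 + k * x * yx))
          = (k:ℝ)^2 * P k * x * a / (1 + k * x * yx) := by
        field_simp
      rw [heq]
      have hNa : 0 ≤ (k:ℝ)^2 * P k * x * a :=
        mul_nonneg (mul_nonneg (mul_nonneg (sq_nonneg _) (hP0 k)) hxpos.le) ha.le
      apply div_le_div_of_nonneg_left hNa hd1
      have : (k:ℝ) * x * yx ≤ (k:ℝ) * x * a :=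
        mul_le_mul_of_nonneg_left hayx (mul_nonneg (Nat.cast_nonneg k) hxpos.le)
      linarith
    calc H a = (1 / avgk) * ∑ k ∈ Finset.range (K+1),
            (k:ℝ)^2 * P k * x * a / (1 + k * x * a) := hH a
      _ ≤ (1 / avgk) * ((a / yx) * ∑ k ∈ Finset.range (K+1),
            (k:ℝ)^2 * P k * x * yx / (1 + k * x * yx)) :=
          mul_le_mul_of_nonneg_left hsum (one_div_nonneg.mpr havgk_pos.le)
      _ = (a / yx) * H yx := by rw [hH yx]; ring
      _ = a := by rw [← hyx_fix]; field_simp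
  -- continuity of H at positive points
  have hcont : ∀ L : ℝ, 0 < L → ContinuousAt H L := by
    intro L hL
    have hHe : H = fun z => (1 / avgk) * ∑ k' ∈ Finset.range (K + 1),
        (k' : ℝ) ^ 2 * P k' * x * z / (1 + k' * x * z) := funext hH
    rw [hHe]
    apply ContinuousAt.mul continuousAt_const
    apply tendsto_finset_sum
    intro k _
    exact ContinuousAt.div (by fun_prop) (by fun_prop) (ne_of_gt (hden k L hL.le))
  -- a generic limit lemma
  have hlim : ∀ L : ℝ, 0 < L → L < 1 → Tendsto y atTop (nhds L) → L = yx := by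
    intro L hL hL1 hT
    have h1 : Tendsto (fun n => y (n + 1)) atTop (nhds L) :=
      hT.comp (tendsto_add_atTop_nat 1)
    have h2 : Tendsto (fun n => H (y n)) atTop (nhds (H L)) :=
      ((hcont L hL).tendsto).comp hT
    have h3 : Tendsto (fun n => y (n + 1)) atTop (nhds (H L)) := by
      simpa only [hiter] using h2
    have : L = H L := tendsto_nhds_unique h1 h3
    exact hyx_uniq L ⟨hL, hL1⟩ this
  rcases lt_trichotomy (y 0) yx with hc | hc | hc
  · -- increasing case
    have hbnd : ∀ n, y 0 ≤ y n ∧ y n ≤ yx := by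
      intro n
      induction n with
      | zero => exact ⟨le_refl _, hc.le⟩
      | succ n ih =>
        obtain ⟨ih1, ih2⟩ := ih
        have hpos : 0 < y n := lt_of_lt_of_le y0_pos ih1
        have hstep : y n ≤ H (y n) := hA (y n) hpos ih2
        constructor
        · rw [hiter]; linarith
        · rw [hiter]
          calc H (y n) ≤ H yx := hmonoH _ _ hpos.le ih2
            _ = yx := hyx_fix.symm
    have hmem : ∀ n, y n ∈ Set.Ioo (0:ℝ) 1 :=
      fun n => ⟨lt_of_lt_of_le y0_pos (hbnd n).1, lt_of_le_of_lt (hbnd n).2 yx_lt1⟩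
    have hmono : Monotone y := by
      apply monotone_nat_of_le_succ
      intro n
      rw [hiter]
      exact hA (y n) (hmem n).1 (hbnd n).2
    have hbdd : BddAbove (Set.range y) := ⟨yx, by rintro _ ⟨n, rfl⟩; exact (hbnd n).2⟩
    have hT : Tendsto y atTop (nhds (⨆ n, y n)) := tendsto_atTop_ciSup hmono hbdd
    have hLle : (⨆ n, y n) ≤ yx := ciSup_le fun n => (hbnd n).2
    have hLge : y 0 ≤ ⨆ n, y n := le_ciSup hbdd 0
    have hLeq : (⨆ n, y n) = yx :=
      hlim _ (lt_of_lt_of_le y0_pos hLge) (lt_of_le_of_lt hLle yx_lt1) hT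
    refine ⟨hmem, fun _ => hmono, fun h => absurd (hmono (Nat.zero_le 1)) (not_le.mpr h), ?_⟩
    rwa [hLeq] at hT
  · -- constant case
    have hconst : ∀ n, y n = yx := by
      intro n
      induction n with
      | zero => exact hc
      | succ n ih => rw [hiter, ih, ← hyx_fix]
    have hmem : ∀ n, y n ∈ Set.Ioo (0:ℝ) 1 := fun n => by rw [hconst n]; exact ⟨yx_pos, yx_lt1⟩
    have hmono : Monotone y := fun a b _ => by rw [hconst a, hconst b]
    have hanti : Antitone y := fun a b _ => by rw [hconst a, hconst b]
    refine ⟨hmem, fun _ => hmono, fun _ => hanti, ?_⟩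
    have : y = fun _ => yx := funext hconst
    rw [this]
    exact tendsto_const_nhds
  · -- decreasing case
    have hbnd : ∀ n, yx ≤ y n ∧ y n ≤ y 0 := by
      intro n
      induction n with
      | zero => exact ⟨hc.le, le_refl _⟩
      | succ n ih =>
        obtain ⟨ih1, ih2⟩ := ih
        have hstep : H (y n) ≤ y n := hB (y n) ih1
        constructor
        · rw [hiter]
          calc yx = H yx := hyx_fix
            _ ≤ H (y n) := hmonoH _ _ yx_pos.le ih1
        · rw [hiter]; linarith
    have hmem : ∀ n, y n ∈ Set.Ioo (0:ℝ) 1 :=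
      fun n => ⟨lt_of_lt_of_le yx_pos (hbnd n).1, lt_of_le_of_lt (hbnd n).2 y0_lt1⟩
    have hanti : Antitone y := by
      apply antitone_nat_of_succ_le
      intro n
      rw [hiter]
      exact hB (y n) (hbnd n).1
    have hbdd : BddBelow (Set.range y) := ⟨yx, by rintro _ ⟨n, rfl⟩; exact (hbnd n).1⟩
    have hT : Tendsto y atTop (nhds (⨅ n, y n)) := tendsto_atTop_ciInf hanti hbdd
    have hLge : yx ≤ ⨅ n, y n := le_ciInf fun n => (hbnd n).1
    have hLle : (⨅ n, y n) ≤ y 0 := ciInf_le hbdd 0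
    have hLeq : (⨅ n, y n) = yx :=
      hlim _ (lt_of_lt_of_le yx_pos hLge) (lt_of_le_of_lt hLle y0_lt1) hT
    refine ⟨hmem, fun h => absurd (hanti (Nat.zero_le 1)) (not_le.mpr h), fun _ => hanti, ?_⟩
    rwa [hLeq] at hT
end

section
/- Let P be a probability distribution on {0,...,K} with ⟨k⟩ > 0, and let X = (⟨k⟩/⟨k²⟩, ∞). Define h : X → (0,1) mapping x to the unique fixed point y_x ∈ (0,1) of y = (1/⟨k⟩)·Σ_{k'} k'²P(k')xy/(1+k'xy). Then h is continuous on X. -/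
open Finset

/-- The map x ↦ y_x sending each x ∈ (⟨k⟩/⟨k²⟩, ∞) to the unique
fixed point y_x ∈ (0,1) of y = (1/⟨k⟩)·Σ_{k'} k'²P(k')xy/(1+k'xy) is
continuous on (⟨k⟩/⟨k²⟩, ∞). -/
theorem fixed_point_map_continuous
    (K : ℕ) (P : ℕ → ℝ)
    (hP0 : ∀ k, 0 ≤ P k) (hP1 : ∀ k, P k ≤ 1)
    (hPsum : ∑ k ∈ Finset.range (K + 1), P k = 1)
    (avgk m2 : ℝ)
    (havgk : avgk = ∑ k ∈ Finset.range (K + 1), (k : ℝ) * P k)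
    (hm2 : m2 = ∑ k ∈ Finset.range (K + 1), (k : ℝ) ^ 2 * P k)
    (havgk_pos : 0 < avgk)
    (H : ℝ → ℝ → ℝ)
    (hH : ∀ x y : ℝ, H x y = (1 / avgk) * ∑ k' ∈ Finset.range (K + 1),
      (k' : ℝ) ^ 2 * P k' * x * y / (1 + k' * x * y))
    (h : ℝ → ℝ)
    (hfix : ∀ x ∈ Set.Ioi (avgk / m2), h x ∈ Set.Ioo (0 : ℝ) 1 ∧ h x = H x (h x))
    (huniq : ∀ x ∈ Set.Ioi (avgk / m2),
      ∀ z ∈ Set.Ioo (0 : ℝ) 1, z = H x z → z = h x) :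
    ContinuousOn h (Set.Ioi (avgk / m2)) := by
  classical
  -- m2 ≥ avgk > 0
  have hm2ge : avgk ≤ m2 := by
    rw [havgk, hm2]
    apply Finset.sum_le_sum
    intro k _
    rcases Nat.eq_zero_or_pos k with hk | hk
    · simp [hk]
    · have h1 : (1 : ℝ) ≤ (k : ℝ) := by exact_mod_cast hk
      have h2 : (k : ℝ) ≤ (k : ℝ) ^ 2 := by nlinarith
      exact mul_le_mul_of_nonneg_right h2 (hP0 k)
  have hm2pos : 0 < m2 := lt_of_lt_of_le havgk_pos hm2ge
  have hcpos : 0 < avgk / m2 := div_pos havgk_pos hm2pos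
  -- a degree with positive weight
  have hk0 : ∃ k ∈ Finset.range (K + 1), (k : ℝ) * P k ≠ 0 := by
    by_contra hcon
    push_neg at hcon
    rw [havgk, Finset.sum_eq_zero hcon] at havgk_pos
    exact lt_irrefl 0 havgk_pos
  obtain ⟨k₀, hk₀mem, hk₀⟩ := hk0
  have hk₀pos : 0 < (k₀ : ℝ) := by
    rcases Nat.eq_zero_or_pos k₀ with hk | hk
    · simp [hk] at hk₀
    · exact_mod_cast hk
  have hPk₀ : 0 < P k₀ := by
    rcases lt_or_eq_of_le (hP0 k₀) with h' | h'
    · exact h'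
    · exact absurd (by rw [← h', mul_zero]) hk₀
  set g : ℝ → ℝ → ℝ :=
    fun x y => ∑ k ∈ Finset.range (K + 1), (k : ℝ) ^ 2 * P k * x / (1 + k * x * y) with hg
  have hne : avgk ≠ 0 := ne_of_gt havgk_pos
  -- fixed point ↔ g x y = avgk
  have key : ∀ x : ℝ, 0 < x → ∀ y : ℝ, 0 < y → y = H x y → g x y = avgk := by
    intro x hx y hy heq
    rw [hH] at heq
    have hsum : ∑ k ∈ Finset.range (K + 1), (k : ℝ) ^ 2 * P k * x * y / (1 + k * x * y)
        = g x y * y := by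
      rw [hg, Finset.sum_mul]
      exact Finset.sum_congr rfl fun k _ => (div_mul_eq_mul_div _ _ _).symm
    rw [hsum] at heq
    obtain ⟨G, hG⟩ : ∃ G, g x y = G := ⟨_, rfl⟩
    rw [hG] at heq ⊢
    have h2 := congrArg (fun t => avgk * t) heq
    have h3 : avgk * (1 / avgk * (G * y)) = G * y := by field_simp
    rw [h3] at h2
    exact (mul_right_cancel₀ (ne_of_gt hy) h2).symm
  -- strict antitonicity of g x on [0, ∞)
  have hanti : ∀ x : ℝ, 0 < x → ∀ y₁ y₂ : ℝ, 0 ≤ y₁ → y₁ < y₂ → g x y₂ < g x y₁ := by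
    intro x hx y₁ y₂ hy₁ hlt
    have hy₂ : 0 ≤ y₂ := hy₁.trans hlt.le
    apply Finset.sum_lt_sum
    · intro k _
      have hkx : (0:ℝ) ≤ (k : ℝ) * x := mul_nonneg (Nat.cast_nonneg k) hx.le
      have hd1 : 0 < 1 + (k : ℝ) * x * y₁ := by nlinarith
      have hd2 : 1 + (k : ℝ) * x * y₁ ≤ 1 + (k : ℝ) * x * y₂ := by nlinarith
      have hnumnn : (0:ℝ) ≤ (k : ℝ) ^ 2 * P k * x :=
        mul_nonneg (mul_nonneg (by positivity) (hP0 k)) hx.le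
      gcongr
    · refine ⟨k₀, hk₀mem, ?_⟩
      have hnum : 0 < (k₀ : ℝ) ^ 2 * P k₀ * x := mul_pos (mul_pos (by positivity) hPk₀) hx
      have hkx : (0:ℝ) < (k₀ : ℝ) * x := mul_pos hk₀pos hx
      have hd1 : 0 < 1 + (k₀ : ℝ) * x * y₁ := by nlinarith
      have hd2 : 1 + (k₀ : ℝ) * x * y₁ < 1 + (k₀ : ℝ) * x * y₂ := by nlinarith
      exact div_lt_div_of_pos_left hnum hd1 hd2
  -- continuity of x ↦ g x y at positive points
  have hgc : ∀ x₀ : ℝ, 0 < x₀ → ∀ y : ℝ, 0 ≤ y → ContinuousAt (fun x => g x y) x₀ := by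
    intro x₀ hx₀ y hy
    apply tendsto_finset_sum
    intro k _
    have hkx : (0:ℝ) ≤ (k : ℝ) * x₀ := mul_nonneg (Nat.cast_nonneg k) hx₀.le
    have hden : (1 : ℝ) + (k : ℝ) * x₀ * y ≠ 0 := by nlinarith [mul_nonneg hkx hy]
    exact (continuousAt_const.mul continuousAt_id).div
      (continuousAt_const.add ((continuousAt_const.mul continuousAt_id).mul
        continuousAt_const)) hden
  -- main argument
  intro x₀ hx₀
  have hx₀pos : 0 < x₀ := hcpos.trans hx₀
  obtain ⟨⟨hh0, hh1⟩, hfx⟩ := hfix x₀ hx₀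
  have hg0 : g x₀ (h x₀) = avgk := key x₀ hx₀pos _ hh0 hfx
  apply Metric.tendsto_nhds.2
  intro ε hε
  have hminpos : 0 < min ε (h x₀) := lt_min hε hh0
  set ε' := min ε (h x₀) / 2 with hε'def
  have hε'pos : 0 < ε' := by positivity
  have hε'lt : ε' < ε := by
    have := min_le_left ε (h x₀); simp only [hε'def]; linarith
  have hε'lth : ε' < h x₀ := by
    have := min_le_right ε (h x₀); simp only [hε'def]; linarith
  set y₁ := h x₀ - ε' with hy₁def
  set y₂ := h x₀ + ε' with hy₂def
  have hy₁pos : 0 < y₁ := by simp only [hy₁def]; linarith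
  have hy₂pos : 0 < y₂ := by simp only [hy₂def]; linarith
  have h1 : avgk < g x₀ y₁ := by
    rw [← hg0]; exact hanti x₀ hx₀pos y₁ (h x₀) hy₁pos.le (by simp only [hy₁def]; linarith)
  have h2 : g x₀ y₂ < avgk := by
    rw [← hg0]; exact hanti x₀ hx₀pos (h x₀) y₂ hh0.le (by simp only [hy₂def]; linarith)
  have e1 : ∀ᶠ x in nhds x₀, avgk < g x y₁ :=
    (hgc x₀ hx₀pos y₁ hy₁pos.le).eventually (eventually_gt_nhds h1)
  have e2 : ∀ᶠ x in nhds x₀, g x y₂ < avgk :=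
    (hgc x₀ hx₀pos y₂ hy₂pos.le).eventually (eventually_lt_nhds h2)
  filter_upwards [nhdsWithin_le_nhds e1, nhdsWithin_le_nhds e2, self_mem_nhdsWithin]
    with x hx1 hx2 hxs
  have hxpos : 0 < x := hcpos.trans hxs
  obtain ⟨⟨hx0', hx1'⟩, hfx'⟩ := hfix x hxs
  have hgx : g x (h x) = avgk := key x hxpos _ hx0' hfx'
  have hlt1 : y₁ < h x := by
    by_contra hcon
    push_neg at hcon
    rcases lt_or_eq_of_le hcon with h' | h'
    · have := hanti x hxpos (h x) y₁ hx0'.le h'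
      rw [hgx] at this
      linarith
    · rw [h'] at hgx; linarith
  have hlt2 : h x < y₂ := by
    by_contra hcon
    push_neg at hcon
    rcases lt_or_eq_of_le hcon with h' | h'
    · have := hanti x hxpos y₂ (h x) hy₂pos.le h'
      rw [hgx] at this
      linarith
    · rw [← h'] at hgx; linarith
  rw [Real.dist_eq, abs_lt]
  constructor
  · simp only [hy₁def] at hlt1; linarith
  · simp only [hy₂def] at hlt2; linarith
end

section
/- Under the single-strain degree-based mean-field SIS dynamics dI_k/dt = −(γ+u)I_k + ζk(1−I_k)Θ(t), with Θ(t) = (1/⟨k⟩)Σ_{k'} k'P(k')I_{k'}(t), consider the Lyapunov function V(t) = Σ_k b_k I_k(t) with b_k = kP(k)/(⟨k⟩(u+γ)). Then dV/dt ≤ Θ(t)·(⟨k²⟩ζ/(⟨k⟩(u+γ)) − 1); in particular, if ζ⟨k²⟩/(⟨k⟩(u+γ)) < 1, then dV/dt < 0 whenever Θ(t) > 0. -/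
open Finset

/-- Along the single-strain controlled SIS dynamics, the Lyapunov
function V(t) = Σ_k b_k I_k(t), b_k = kP(k)/(⟨k⟩(u+γ)), has a derivative
bounded by Θ(t)·(⟨k²⟩ζ/(⟨k⟩(u+γ)) − 1); in particular the derivative is
negative when ζ⟨k²⟩/(⟨k⟩(u+γ)) < 1 and Θ(t) > 0. -/
theorem lyapunov_disease_free
    (K : ℕ) (P : ℕ → ℝ)
    (hP0 : ∀ k, 0 ≤ P k) (hP1 : ∀ k, P k ≤ 1)
    (hPsum : ∑ k ∈ Finset.range (K + 1), P k = 1)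
    (avgk m2 : ℝ)
    (havgk : avgk = ∑ k ∈ Finset.range (K + 1), (k : ℝ) * P k)
    (hm2 : m2 = ∑ k ∈ Finset.range (K + 1), (k : ℝ) ^ 2 * P k)
    (havgk_pos : 0 < avgk)
    (γ ζ u : ℝ) (hγ : 0 < γ) (hζ : 0 < ζ) (hu : 0 ≤ u)
    (I : ℕ → ℝ → ℝ)
    (Θ : ℝ → ℝ)
    (hΘ : ∀ t : ℝ, Θ t = (1 / avgk) * ∑ k ∈ Finset.range (K + 1),
      (k : ℝ) * P k * I k t)
    (t : ℝ)
    (hI01 : ∀ k, 0 ≤ I k t ∧ I k t ≤ 1)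
    (hdyn : ∀ k ∈ Finset.range (K + 1),
      HasDerivAt (I k) (-(γ + u) * I k t + ζ * k * (1 - I k t) * Θ t) t)
    (V : ℝ → ℝ)
    (hV : ∀ s : ℝ, V s = ∑ k ∈ Finset.range (K + 1),
      ((k : ℝ) * P k / (avgk * (u + γ))) * I k s) :
    ∃ v : ℝ, HasDerivAt V v t ∧
      v ≤ Θ t * (m2 * ζ / (avgk * (u + γ)) - 1) ∧
      (ζ * m2 / (avgk * (u + γ)) < 1 → 0 < Θ t → v < 0) := by
  classical
  set A := avgk * (u + γ) with hA
  have hApos : 0 < A := mul_pos havgk_pos (by linarith)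
  have hΘ0 : 0 ≤ Θ t := by
    rw [hΘ]
    apply mul_nonneg (by positivity)
    apply Finset.sum_nonneg
    intro k _
    have h1 := (hI01 k).1
    have h2 := hP0 k
    positivity
  have hbound : ∑ k ∈ Finset.range (K + 1), ((k : ℝ) * P k / A) *
      (-(γ + u) * I k t + ζ * k * (1 - I k t) * Θ t)
      ≤ Θ t * (m2 * ζ / A - 1) := by
    have hle : ∑ k ∈ Finset.range (K + 1), ((k : ℝ) * P k / A) *
        (-(γ + u) * I k t + ζ * k * (1 - I k t) * Θ t)
        ≤ ∑ k ∈ Finset.range (K + 1), ((k : ℝ) * P k / A) *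
        (-(γ + u) * I k t + ζ * k * Θ t) := by
      apply Finset.sum_le_sum
      intro k _
      have hb : 0 ≤ (k : ℝ) * P k / A := by
        have := hP0 k; positivity
      have hIk := hI01 k
      have hinner : ζ * k * (1 - I k t) * Θ t ≤ ζ * k * Θ t := by
        have hk0 : (0:ℝ) ≤ ζ * k := by positivity
        nlinarith [mul_nonneg (mul_nonneg hk0 hIk.1) hΘ0]
      have := mul_le_mul_of_nonneg_left (by linarith : -(γ + u) * I k t +
        ζ * k * (1 - I k t) * Θ t ≤ -(γ + u) * I k t + ζ * k * Θ t) hb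
      linarith
    have hS : (∑ k ∈ Finset.range (K + 1), (k : ℝ) * P k * I k t) = avgk * Θ t := by
      rw [hΘ]; field_simp
    have key : ∑ k ∈ Finset.range (K + 1), ((k : ℝ) * P k / A) *
        (-(γ + u) * I k t + ζ * k * Θ t) = Θ t * (m2 * ζ / A - 1) := by
      have expand : ∀ k ∈ Finset.range (K + 1), ((k : ℝ) * P k / A) *
          (-(γ + u) * I k t + ζ * k * Θ t)
          = (-(γ + u) / A) * ((k : ℝ) * P k * I k t)
            + (ζ * Θ t / A) * ((k : ℝ) ^ 2 * P k) := by
        intro k _; ring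
      rw [Finset.sum_congr rfl expand, Finset.sum_add_distrib,
        ← Finset.mul_sum, ← Finset.mul_sum, hS, ← hm2]
      rw [hA]
      field_simp
      ring
    linarith [key ▸ hle]
  refine ⟨∑ k ∈ Finset.range (K + 1), ((k : ℝ) * P k / A) *
      (-(γ + u) * I k t + ζ * k * (1 - I k t) * Θ t), ?_, hbound, ?_⟩
  · have hVfun : V = fun x => ∑ k ∈ Finset.range (K + 1),
        ((k : ℝ) * P k / A) * I k x := funext hV
    rw [hVfun]
    exact HasDerivAt.fun_sum fun k hk => (hdyn k hk).const_mul _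
  · intro h1 h2
    have hfac : m2 * ζ / A - 1 < 0 := by
      have heq : ζ * m2 / A = m2 * ζ / A := by ring
      linarith [heq ▸ h1]
    calc _ ≤ Θ t * (m2 * ζ / A - 1) := hbound
      _ < 0 := mul_neg_of_pos_of_neg h2 hfac
end
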